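/- For all x > 0 and p > 0, 1 − x/p ≤ (1 + x)^{-1/p} < 1 − x/p + ((p+1)/(2p²)) x². -/

import Mathlib

open Real Set

lemma aux_key (r : ℝ) (hr : 0 < r) (x : ℝ) (hx : 0 < x) :
    1 < (1 - r * x + r * (r + 1) / 2 * x ^ 2) * (1 + x) ^ r := by
  set h : ℝ → ℝ := fun t => (1 - r * t + r * (r + 1) / 2 * t ^ 2) * (1 + t) ^ r with hh
  have hcont : Continuous h := by
    apply Continuous.mul
    · continuity
    · exact (continuous_const.add continuous_id).rpow_const (fun t => Or.inr hr.le)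
  have hderiv : ∀ t : ℝ, 0 < t → HasDerivAt h
      ((-r + r * (r + 1) / 2 * (2 * t)) * (1 + t) ^ r
        + (1 - r * t + r * (r + 1) / 2 * t ^ 2) * (r * (1 + t) ^ (r - 1) * 1)) t := by
    intro t ht
    have h1t : (0:ℝ) < 1 + t := by linarith
    have hpoly : HasDerivAt (fun t : ℝ => 1 - r * t + r * (r + 1) / 2 * t ^ 2)
        (-r + r * (r + 1) / 2 * (2 * t)) t := by
      have h1 : HasDerivAt (fun t : ℝ => r * t) (r * 1) t := (hasDerivAt_id t).const_mul r
      have h2 : HasDerivAt (fun t : ℝ => t ^ 2) (2 * t ^ 1) t := by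
        simpa using hasDerivAt_pow 2 t
      have h3 : HasDerivAt (fun t : ℝ => 1 - r * t + r * (r + 1) / 2 * t ^ 2)
          (0 - r * 1 + r * (r + 1) / 2 * (2 * t ^ 1)) t := ((hasDerivAt_const t (1:ℝ)).sub h1).add (h2.const_mul (r * (r + 1) / 2))
      convert h3 using 1
      ring
    have hrpow : HasDerivAt (fun t : ℝ => (1 + t) ^ r) (r * (1 + t) ^ (r - 1) * 1) t := by
      have hin : HasDerivAt (fun t : ℝ => 1 + t) 1 t := (hasDerivAt_id t).const_add 1
      exact (Real.hasDerivAt_rpow_const (Or.inl h1t.ne')).comp t hin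
    exact hpoly.mul hrpow
  have hmono : StrictMonoOn h (Ici (0:ℝ)) := by
    apply strictMonoOn_of_deriv_pos (convex_Ici 0) hcont.continuousOn
    intro t ht
    rw [interior_Ici] at ht
    have ht : (0:ℝ) < t := ht
    have h1t : (0:ℝ) < 1 + t := by linarith
    rw [(hderiv t ht).deriv]
    have hsplit : (1 + t) ^ r = (1 + t) ^ (r - 1) * (1 + t) := by
      rw [← Real.rpow_add_one h1t.ne' (r - 1)]
      ring_nf
    rw [hsplit]
    have hfac : (-r + r * (r + 1) / 2 * (2 * t)) * ((1 + t) ^ (r - 1) * (1 + t))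
        + (1 - r * t + r * (r + 1) / 2 * t ^ 2) * (r * (1 + t) ^ (r - 1) * 1)
        = (1 + t) ^ (r - 1) * (r * (r + 1) * (r + 2) / 2 * t ^ 2) := by ring
    rw [hfac]
    have hb : (0:ℝ) < (1 + t) ^ (r - 1) := Real.rpow_pos_of_pos h1t _
    have : (0:ℝ) < r * (r + 1) * (r + 2) / 2 * t ^ 2 := by positivity
    positivity
  have h0 : h 0 = 1 := by simp [hh]
  have := hmono (self_mem_Ici) (le_of_lt hx : (0:ℝ) ≤ x) hx
  rw [h0] at this
  exact this

theorem one_add_rpow_neg_inv_bounds (x p : ℝ) (hx : 0 < x) (hp : 0 < p) :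
    1 - x / p ≤ (1 + x) ^ (-(1 / p)) ∧
      (1 + x) ^ (-(1 / p)) < 1 - x / p + (p + 1) / (2 * p ^ 2) * x ^ 2 := by
  have h1x : (0:ℝ) < 1 + x := by linarith
  set r : ℝ := 1 / p with hrdef
  have hr : 0 < r := by positivity
  constructor
  · rw [Real.rpow_def_of_pos h1x]
    have hlog : Real.log (1 + x) ≤ x := by
      have := Real.log_le_sub_one_of_pos h1x
      linarith
    have hlog0 : 0 ≤ Real.log (1 + x) := Real.log_nonneg (by linarith)
    calc 1 - x / p = 1 - x * r := by rw [hrdef]; ring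
      _ ≤ 1 + Real.log (1 + x) * (-(1 / p)) := by
          rw [hrdef]
          have : Real.log (1 + x) * (1 / p) ≤ x * (1 / p) :=
            mul_le_mul_of_nonneg_right hlog (by positivity)
          nlinarith
      _ ≤ Real.exp (Real.log (1 + x) * (-(1 / p))) := by
          linarith [Real.add_one_le_exp (Real.log (1 + x) * (-(1 / p)))]
  · have key := aux_key r hr x hx
    have hpow : (1 + x) ^ (-(1 / p)) = ((1 + x) ^ r)⁻¹ := by
      rw [hrdef, Real.rpow_neg h1x.le]
    have hposr : (0:ℝ) < (1 + x) ^ r := Real.rpow_pos_of_pos h1x r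
    have hg : 1 - r * x + r * (r + 1) / 2 * x ^ 2
        = 1 - x / p + (p + 1) / (2 * p ^ 2) * x ^ 2 := by
      rw [hrdef]
      field_simp
      ring
    rw [hpow, ← hg]
    rw [inv_lt_iff_one_lt_mul₀ hposr]
    linarith [key]
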